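/- For all t in [-1,1], arccos|t| ≤ π/2 - (69/50)·t². -/

import Mathlib

open Real

private lemma taylor_aux (f f' : ℝ → ℝ) (hf : ∀ x, HasDerivAt f (f' x) x) (h0 : f 0 = 0)
    (hd : ∀ x, 0 ≤ x → 0 ≤ f' x) {x : ℝ} (hx : 0 ≤ x) : 0 ≤ f x := by
  have hmono : MonotoneOn f (Set.Ici 0) := by
    apply monotoneOn_of_deriv_nonneg (convex_Ici 0)
    · exact fun y _ => (hf y).continuousAt.continuousWithinAt
    · exact fun y _ => (hf y).differentiableAt.differentiableWithinAt
    · intro y hy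
      rw [(hf y).deriv]
      exact hd y (le_of_lt (by simpa [interior_Ici] using hy))
  have := hmono Set.self_mem_Ici hx hx
  linarith [h0 ▸ this]

private lemma sin_ge_3 {x : ℝ} (hx : 0 ≤ x) : x - x ^ 3 / 6 ≤ Real.sin x := by
  have h := taylor_aux (fun y => Real.sin y - (y - y ^ 3 / 6))
      (fun y => Real.cos y - (1 - y ^ 2 / 2)) (fun y => by
        have := ((Real.hasDerivAt_sin y).sub ((hasDerivAt_id y).sub
          ((hasDerivAt_pow 3 y).div_const 6)))
        convert this using 1 <;> (first | rfl | (funext z; simp only [Pi.sub_apply, Pi.add_apply, Pi.neg_apply, id]; ring) | ring))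
      (by simp) (fun y _ => by nlinarith [Real.one_sub_sq_div_two_le_cos (x := y)]) hx
  simpa using by linarith [h]

private lemma cos_le_4 {x : ℝ} (hx : 0 ≤ x) : Real.cos x ≤ 1 - x ^ 2 / 2 + x ^ 4 / 24 := by
  have h := taylor_aux (fun y => (1 - y ^ 2 / 2 + y ^ 4 / 24) - Real.cos y)
      (fun y => (y ^ 3 / 6 - y) + Real.sin y) (fun y => by
        have := (((hasDerivAt_pow 2 y).div_const 2).neg.add
          ((hasDerivAt_pow 4 y).div_const 24)).add_const 1 |>.sub (Real.hasDerivAt_cos y)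
        convert this using 1 <;> (first | rfl | (funext z; simp only [Pi.sub_apply, Pi.add_apply, Pi.neg_apply, id]; ring) | ring))
      (by norm_num) (fun y hy => by nlinarith [sin_ge_3 hy]) hx
  linarith [h]

private lemma sin_le_5 {x : ℝ} (hx : 0 ≤ x) : Real.sin x ≤ x - x ^ 3 / 6 + x ^ 5 / 120 := by
  have h := taylor_aux (fun y => (y - y ^ 3 / 6 + y ^ 5 / 120) - Real.sin y)
      (fun y => (1 - y ^ 2 / 2 + y ^ 4 / 24) - Real.cos y) (fun y => by
        have := (((hasDerivAt_id y).sub ((hasDerivAt_pow 3 y).div_const 6)).add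
          ((hasDerivAt_pow 5 y).div_const 120)).sub (Real.hasDerivAt_sin y)
        convert this using 1 <;> (first | rfl | (funext z; simp only [Pi.sub_apply, Pi.add_apply, Pi.neg_apply, id]; ring) | ring))
      (by norm_num) (fun y hy => by linarith [cos_le_4 hy]) hx
  linarith [h]

private lemma cos_ge_6 {x : ℝ} (hx : 0 ≤ x) :
    1 - x ^ 2 / 2 + x ^ 4 / 24 - x ^ 6 / 720 ≤ Real.cos x := by
  have h := taylor_aux (fun y => Real.cos y - (1 - y ^ 2 / 2 + y ^ 4 / 24 - y ^ 6 / 720))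
      (fun y => (y - y ^ 3 / 6 + y ^ 5 / 120) - Real.sin y) (fun y => by
        have := (Real.hasDerivAt_cos y).sub
          (((((hasDerivAt_pow 2 y).div_const 2).neg.add
            ((hasDerivAt_pow 4 y).div_const 24)).sub
            ((hasDerivAt_pow 6 y).div_const 720)).add_const 1)
        convert this using 1 <;> (first | rfl | (funext z; simp only [Pi.sub_apply, Pi.add_apply, Pi.neg_apply, id]; ring) | ring))
      (by norm_num) (fun y hy => by linarith [sin_le_5 hy]) hx
  linarith [h]

private lemma sin_ge_7 {x : ℝ} (hx : 0 ≤ x) :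
    x - x ^ 3 / 6 + x ^ 5 / 120 - x ^ 7 / 5040 ≤ Real.sin x := by
  have h := taylor_aux
      (fun y => Real.sin y - (y - y ^ 3 / 6 + y ^ 5 / 120 - y ^ 7 / 5040))
      (fun y => Real.cos y - (1 - y ^ 2 / 2 + y ^ 4 / 24 - y ^ 6 / 720)) (fun y => by
        have := (Real.hasDerivAt_sin y).sub
          ((((hasDerivAt_id y).sub ((hasDerivAt_pow 3 y).div_const 6)).add
            ((hasDerivAt_pow 5 y).div_const 120)).sub ((hasDerivAt_pow 7 y).div_const 5040))
        convert this using 1 <;> (first | rfl | (funext z; simp only [Pi.sub_apply, Pi.add_apply, Pi.neg_apply, id]; ring) | ring))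
      (by norm_num) (fun y hy => by linarith [cos_ge_6 hy]) hx
  linarith [h]

private lemma cos_le_8 {x : ℝ} (hx : 0 ≤ x) :
    Real.cos x ≤ 1 - x ^ 2 / 2 + x ^ 4 / 24 - x ^ 6 / 720 + x ^ 8 / 40320 := by
  have h := taylor_aux
      (fun y => (1 - y ^ 2 / 2 + y ^ 4 / 24 - y ^ 6 / 720 + y ^ 8 / 40320) - Real.cos y)
      (fun y => (y ^ 3 / 6 - y - y ^ 5 / 120 + y ^ 7 / 5040) + Real.sin y) (fun y => by
        have := ((((((hasDerivAt_pow 2 y).div_const 2).neg.add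
          ((hasDerivAt_pow 4 y).div_const 24)).sub
          ((hasDerivAt_pow 6 y).div_const 720)).add
          ((hasDerivAt_pow 8 y).div_const 40320)).add_const 1).sub (Real.hasDerivAt_cos y)
        convert this using 1 <;> (first | rfl | (funext z; simp only [Pi.sub_apply, Pi.add_apply, Pi.neg_apply, id]; ring) | ring))
      (by norm_num) (fun y hy => by linarith [sin_ge_7 hy]) hx
  linarith [h]

private lemma sin_le_9 {x : ℝ} (hx : 0 ≤ x) :
    Real.sin x ≤ x - x ^ 3 / 6 + x ^ 5 / 120 - x ^ 7 / 5040 + x ^ 9 / 362880 := by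
  have h := taylor_aux
      (fun y => (y - y ^ 3 / 6 + y ^ 5 / 120 - y ^ 7 / 5040 + y ^ 9 / 362880) - Real.sin y)
      (fun y => (1 - y ^ 2 / 2 + y ^ 4 / 24 - y ^ 6 / 720 + y ^ 8 / 40320) - Real.cos y)
      (fun y => by
        have := (((((hasDerivAt_id y).sub ((hasDerivAt_pow 3 y).div_const 6)).add
          ((hasDerivAt_pow 5 y).div_const 120)).sub
          ((hasDerivAt_pow 7 y).div_const 5040)).add
          ((hasDerivAt_pow 9 y).div_const 362880)).sub (Real.hasDerivAt_sin y)
        convert this using 1 <;> (first | rfl | (funext z; simp only [Pi.sub_apply, Pi.add_apply, Pi.neg_apply, id]; ring) | ring))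
      (by norm_num) (fun y hy => by linarith [cos_le_8 hy]) hx
  linarith [h]

set_option maxHeartbeats 2000000 in
private lemma poly_key (x : ℝ) (hx0 : 0 ≤ x) (hx1 : x ≤ 69 / 50) :
    (69 / 50) * x * (1 - x ^ 2 / 6 + x ^ 4 / 120 - x ^ 6 / 5040 + x ^ 8 / 362880) ^ 2 ≤ 1 := by
  rcases le_or_gt x (69/100:ℝ) with hub | hub
  · have hl : (0:ℝ) ≤ x - (0) := by linarith
    have hr : (0:ℝ) ≤ (69/100) - x := by linarith
    nlinarith [mul_nonneg (pow_nonneg hl 0) (pow_nonneg hr 17), mul_nonneg (pow_nonneg hl 1) (pow_nonneg hr 16), mul_nonneg (pow_nonneg hl 2) (pow_nonneg hr 15), mul_nonneg (pow_nonneg hl 3) (pow_nonneg hr 14), mul_nonneg (pow_nonneg hl 4) (pow_nonneg hr 13), mul_nonneg (pow_nonneg hl 5) (pow_nonneg hr 12), mul_nonneg (pow_nonneg hl 6) (pow_nonneg hr 11), mul_nonneg (pow_nonneg hl 7) (pow_nonneg hr 10), mul_nonneg (pow_nonneg hl 8) (pow_nonneg hr 9), mul_nonneg (pow_nonneg hl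 9) (pow_nonneg hr 8), mul_nonneg (pow_nonneg hl 10) (pow_nonneg hr 7), mul_nonneg (pow_nonneg hl 11) (pow_nonneg hr 6), mul_nonneg (pow_nonneg hl 12) (pow_nonneg hr 5), mul_nonneg (pow_nonneg hl 13) (pow_nonneg hr 4), mul_nonneg (pow_nonneg hl 14) (pow_nonneg hr 3), mul_nonneg (pow_nonneg hl 15) (pow_nonneg hr 2), mul_nonneg (pow_nonneg hl 16) (pow_nonneg hr 1), mul_nonneg (pow_nonneg hl 17) (pow_nonneg hr 0)]
  rcases le_or_gt x (207/200:ℝ) with hub | hub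
  · have hl : (0:ℝ) ≤ x - (69/100) := by linarith
    have hr : (0:ℝ) ≤ (207/200) - x := by linarith
    nlinarith [mul_nonneg (pow_nonneg hl 0) (pow_nonneg hr 17), mul_nonneg (pow_nonneg hl 1) (pow_nonneg hr 16), mul_nonneg (pow_nonneg hl 2) (pow_nonneg hr 15), mul_nonneg (pow_nonneg hl 3) (pow_nonneg hr 14), mul_nonneg (pow_nonneg hl 4) (pow_nonneg hr 13), mul_nonneg (pow_nonneg hl 5) (pow_nonneg hr 12), mul_nonneg (pow_nonneg hl 6) (pow_nonneg hr 11), mul_nonneg (pow_nonneg hl 7) (pow_nonneg hr 10), mul_nonneg (pow_nonneg hl 8) (pow_nonneg hr 9), mul_nonneg (pow_nonneg hl 9) (pow_nonneg hr 8), mul_nonneg (pow_nonneg hl 10) (pow_nonneg hr 7), mul_nonneg (pow_nonneg hl 11) (pow_nonneg hr 6), mul_nonneg (pow_nonneg hl 12) (pow_nonneg hr 5), mul_nonneg (pow_nonneg hl 13) (pow_nonneg hr 4), mul_nonneg (pow_nonneg hl 14) (pow_nonneg hr 3), mul_nonneg (pow_nonneg hl 15) (pow_nonneg hr 2), mul_nonneg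 (pow_nonneg hl 16) (pow_nonneg hr 1), mul_nonneg (pow_nonneg hl 17) (pow_nonneg hr 0)]
  rcases le_or_gt x (897/800:ℝ) with hub | hub
  · have hl : (0:ℝ) ≤ x - (207/200) := by linarith
    have hr : (0:ℝ) ≤ (897/800) - x := by linarith
    nlinarith [mul_nonneg (pow_nonneg hl 0) (pow_nonneg hr 17), mul_nonneg (pow_nonneg hl 1) (pow_nonneg hr 16), mul_nonneg (pow_nonneg hl 2) (pow_nonneg hr 15), mul_nonneg (pow_nonneg hl 3) (pow_nonneg hr 14), mul_nonneg (pow_nonneg hl 4) (pow_nonneg hr 13), mul_nonneg (pow_nonneg hl 5) (pow_nonneg hr 12), mul_nonneg (pow_nonneg hl 6) (pow_nonneg hr 11), mul_nonneg (pow_nonneg hl 7) (pow_nonneg hr 10), mul_nonneg (pow_nonneg hl 8) (pow_nonneg hr 9), mul_nonneg (pow_nonneg hl 9) (pow_nonneg hr 8), mul_nonneg (pow_nonneg hl 10) (pow_nonneg hr 7), mul_nonneg (pow_nonneg hl 11) (pow_nonneg hr 6), mul_nonneg (pow_nonneg hl 12) (pow_nonneg hr 5), mul_nonneg (pow_nonneg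 hl 13) (pow_nonneg hr 4), mul_nonneg (pow_nonneg hl 14) (pow_nonneg hr 3), mul_nonneg (pow_nonneg hl 15) (pow_nonneg hr 2), mul_nonneg (pow_nonneg hl 16) (pow_nonneg hr 1), mul_nonneg (pow_nonneg hl 17) (pow_nonneg hr 0)]
  rcases le_or_gt x (1863/1600:ℝ) with hub | hub
  · have hl : (0:ℝ) ≤ x - (897/800) := by linarith
    have hr : (0:ℝ) ≤ (1863/1600) - x := by linarith
    nlinarith [mul_nonneg (pow_nonneg hl 0) (pow_nonneg hr 17), mul_nonneg (pow_nonneg hl 1) (pow_nonneg hr 16), mul_nonneg (pow_nonneg hl 2) (pow_nonneg hr 15), mul_nonneg (pow_nonneg hl 3) (pow_nonneg hr 14), mul_nonneg (pow_nonneg hl 4) (pow_nonneg hr 13), mul_nonneg (pow_nonneg hl 5) (pow_nonneg hr 12), mul_nonneg (pow_nonneg hl 6) (pow_nonneg hr 11), mul_nonneg (pow_nonneg hl 7) (pow_nonneg hr 10), mul_nonneg (pow_nonneg hl 8) (pow_nonneg hr 9), mul_nonneg (pow_nonneg hl 9) (pow_nonneg hr 8), mul_nonneg (pow_nonneg hl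 10) (pow_nonneg hr 7), mul_nonneg (pow_nonneg hl 11) (pow_nonneg hr 6), mul_nonneg (pow_nonneg hl 12) (pow_nonneg hr 5), mul_nonneg (pow_nonneg hl 13) (pow_nonneg hr 4), mul_nonneg (pow_nonneg hl 14) (pow_nonneg hr 3), mul_nonneg (pow_nonneg hl 15) (pow_nonneg hr 2), mul_nonneg (pow_nonneg hl 16) (pow_nonneg hr 1), mul_nonneg (pow_nonneg hl 17) (pow_nonneg hr 0)]
  rcases le_or_gt x (483/400:ℝ) with hub | hub
  · have hl : (0:ℝ) ≤ x - (1863/1600) := by linarith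
    have hr : (0:ℝ) ≤ (483/400) - x := by linarith
    nlinarith [mul_nonneg (pow_nonneg hl 0) (pow_nonneg hr 17), mul_nonneg (pow_nonneg hl 1) (pow_nonneg hr 16), mul_nonneg (pow_nonneg hl 2) (pow_nonneg hr 15), mul_nonneg (pow_nonneg hl 3) (pow_nonneg hr 14), mul_nonneg (pow_nonneg hl 4) (pow_nonneg hr 13), mul_nonneg (pow_nonneg hl 5) (pow_nonneg hr 12), mul_nonneg (pow_nonneg hl 6) (pow_nonneg hr 11), mul_nonneg (pow_nonneg hl 7) (pow_nonneg hr 10), mul_nonneg (pow_nonneg hl 8) (pow_nonneg hr 9), mul_nonneg (pow_nonneg hl 9) (pow_nonneg hr 8), mul_nonneg (pow_nonneg hl 10) (pow_nonneg hr 7), mul_nonneg (pow_nonneg hl 11) (pow_nonneg hr 6), mul_nonneg (pow_nonneg hl 12) (pow_nonneg hr 5), mul_nonneg (pow_nonneg hl 13) (pow_nonneg hr 4), mul_nonneg (pow_nonneg hl 14) (pow_nonneg hr 3), mul_nonneg (pow_nonneg hl 15) (pow_nonneg hr 2), mul_nonneg (pow_nonneg hl 16) (pow_nonneg hr 1), mul_nonneg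 (pow_nonneg hl 17) (pow_nonneg hr 0)]
  have hl : (0:ℝ) ≤ x - (483/400) := by linarith
  have hr : (0:ℝ) ≤ (69/50) - x := by linarith
  nlinarith [mul_nonneg (pow_nonneg hl 0) (pow_nonneg hr 17), mul_nonneg (pow_nonneg hl 1) (pow_nonneg hr 16), mul_nonneg (pow_nonneg hl 2) (pow_nonneg hr 15), mul_nonneg (pow_nonneg hl 3) (pow_nonneg hr 14), mul_nonneg (pow_nonneg hl 4) (pow_nonneg hr 13), mul_nonneg (pow_nonneg hl 5) (pow_nonneg hr 12), mul_nonneg (pow_nonneg hl 6) (pow_nonneg hr 11), mul_nonneg (pow_nonneg hl 7) (pow_nonneg hr 10), mul_nonneg (pow_nonneg hl 8) (pow_nonneg hr 9), mul_nonneg (pow_nonneg hl 9) (pow_nonneg hr 8), mul_nonneg (pow_nonneg hl 10) (pow_nonneg hr 7), mul_nonneg (pow_nonneg hl 11) (pow_nonneg hr 6), mul_nonneg (pow_nonneg hl 12) (pow_nonneg hr 5), mul_nonneg (pow_nonneg hl 13) (pow_nonneg hr 4), mul_nonneg (pow_nonneg hl 14) (pow_nonneg hr 3), mul_nonneg (pow_nonneg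 hl 15) (pow_nonneg hr 2), mul_nonneg (pow_nonneg hl 16) (pow_nonneg hr 1), mul_nonneg (pow_nonneg hl 17) (pow_nonneg hr 0)]

private lemma abs_key_sq_le (a u : ℝ) (hu : 0 ≤ u) (h : a ^ 2 ≤ u ^ 2) : a ≤ u := by
  nlinarith [sq_nonneg (a - u), sq_nonneg (a + u)]

private lemma sin_key (u : ℝ) (hu0 : 0 ≤ u) (hu1 : u ≤ 1) :
    Real.sin ((69 / 50) * u ^ 2) ≤ u := by
  have hy0 : (0:ℝ) ≤ (69 / 50) * u ^ 2 := by positivity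
  have hy1 : (69 / 50) * u ^ 2 ≤ 69 / 50 := by nlinarith
  have h9 := sin_le_9 hy0
  have hpoly := poly_key ((69 / 50) * u ^ 2) hy0 hy1
  set y : ℝ := (69 / 50) * u ^ 2 with hy_def
  have hexp : (y - y ^ 3 / 6 + y ^ 5 / 120 - y ^ 7 / 5040 + y ^ 9 / 362880) ^ 2
      = u ^ 2 * ((69 / 50) * y * (1 - y ^ 2 / 6 + y ^ 4 / 120 - y ^ 6 / 5040 + y ^ 8 / 362880) ^ 2) := by
    rw [hy_def]; ring
  have hmul : u ^ 2 * ((69 / 50) * y * (1 - y ^ 2 / 6 + y ^ 4 / 120 - y ^ 6 / 5040 + y ^ 8 / 362880) ^ 2)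
      ≤ u ^ 2 * 1 := mul_le_mul_of_nonneg_left hpoly (sq_nonneg u)
  have hsq : (y - y ^ 3 / 6 + y ^ 5 / 120 - y ^ 7 / 5040 + y ^ 9 / 362880) ^ 2 ≤ u ^ 2 := by
    rw [hexp]; linarith
  have := abs_key_sq_le _ _ hu0 hsq
  linarith

theorem stmt_0 : ∀ t ∈ Set.Icc (-1 : ℝ) 1,
    Real.arccos |t| ≤ Real.pi / 2 - (69 / 50) * t ^ 2 := by
  intro t ht
  obtain ⟨ht1, ht2⟩ := ht
  have hu0 : 0 ≤ |t| := abs_nonneg t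
  have hu1 : |t| ≤ 1 := abs_le.2 ⟨ht1, ht2⟩
  have ht2u : t ^ 2 = |t| ^ 2 := (sq_abs t).symm
  have hy0 : (0:ℝ) ≤ (69 / 50) * |t| ^ 2 := by positivity
  have hy1 : (69 / 50) * |t| ^ 2 ≤ 69 / 50 := by nlinarith
  have hpi : (69 : ℝ) / 50 ≤ π / 2 := by
    have := Real.pi_gt_three
    linarith
  have hsin := sin_key |t| hu0 hu1
  have harcsin : (69 / 50) * |t| ^ 2 ≤ Real.arcsin |t| := by
    rw [Real.le_arcsin_iff_sin_le ⟨by linarith, by linarith⟩ ⟨by linarith, hu1⟩]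
    exact hsin
  rw [Real.arccos, ht2u]
  linarith
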